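/- The extended stabilizer 2-Rényi entropy for mixed states, M̃₂(ρ) := −log( Σ_P tr(Pρ)⁴ / Σ_P tr(Pρ)² ), vanishes on every mixed stabilizer state χ = I/d + d^{-1} Σ_{P∈G} φ_P P with φ_P ∈ {±1} and G a subset of Pauli strings with 0 < |G| < d−1 making χ positive semidefinite. -/

import Mathlib

open Matrix BigOperators
open scoped ComplexOrder

/-- The extended stabilizer 2-Rényi entropy
M̃₂(ρ) = −log(∑_P tr(Pρ)⁴ / ∑_P tr(Pρ)²) vanishes on every mixed stabilizer state
χ = I/d + d⁻¹ ∑_{P∈G} φ_P P with signs φ_P = ±1, G a set of non-identity Pauli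
strings with 0 < |G| < d−1, and χ positive semidefinite. -/
theorem stmt_10 (n : ℕ) (hn : 1 ≤ n) (d : ℕ) (hd : d = 2 ^ n)
    (P : Fin (d ^ 2) → Matrix (Fin d) (Fin d) ℂ)
    (hherm : ∀ i, (P i).IsHermitian)
    (hsq : ∀ i, P i * P i = 1)
    (horth : ∀ i j, Matrix.trace (P i * P j) = if i = j then (d : ℂ) else 0)
    (i₀ : Fin (d ^ 2)) (hP0 : P i₀ = 1)
    (G : Finset (Fin (d ^ 2))) (hG0 : i₀ ∉ G)
    (hGlb : 0 < G.card) (hGub : G.card < d - 1)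
    (φ : Fin (d ^ 2) → ℝ) (hφ : ∀ i ∈ G, φ i = 1 ∨ φ i = -1)
    (χ : Matrix (Fin d) (Fin d) ℂ)
    (hχ : χ = (d : ℂ)⁻¹ • (1 : Matrix (Fin d) (Fin d) ℂ) +
        (d : ℂ)⁻¹ • ∑ i ∈ G, (φ i : ℂ) • P i)
    (hpsd : χ.PosSemidef) :
    -Real.log ((∑ i, ((Matrix.trace (P i * χ)).re) ^ 4) /
        (∑ i, ((Matrix.trace (P i * χ)).re) ^ 2)) = 0 := by
  have hd0 : (d : ℂ) ≠ 0 := by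
    have : 0 < d := by rw [hd]; positivity
    exact_mod_cast this.ne'
  have key : ∀ i, (Matrix.trace (P i * χ)).re =
      if i = i₀ then 1 else if i ∈ G then φ i else 0 := by
    intro i
    have htr : Matrix.trace (P i * χ) =
        if i = i₀ then 1 else if i ∈ G then (φ i : ℂ) else 0 := by
      have h1 : Matrix.trace (P i) = if i = i₀ then (d : ℂ) else 0 := by
        have := horth i i₀; rwa [hP0, Matrix.mul_one] at this
      rw [hχ]
      simp only [Matrix.mul_add, Matrix.mul_smul, Matrix.mul_one, Finset.mul_sum,
        Matrix.trace_add, Matrix.trace_smul, Matrix.trace_sum, horth, h1,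
        smul_ite, smul_zero, Finset.sum_ite_eq, smul_eq_mul]
      rcases eq_or_ne i i₀ with h | h
      · have hiG : i ∉ G := h ▸ hG0
        simp [h, hiG, inv_mul_cancel₀ hd0]
        exact fun hmem => (hG0 hmem).elim
      · by_cases hi : i ∈ G
        · simp only [if_neg h, if_pos hi, mul_zero, zero_add]
          rw [Finset.sum_eq_single_of_mem i hi (by intro b _ hb; simp [Ne.symm hb])]
          simp only [if_pos rfl]
          field_simp
          rw [if_pos trivial]; ring
        · simp [h, hi]
    rw [htr]
    split_ifs <;> simp
  have hval : ∀ k ∈ ({2, 4} : Finset ℕ),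
      (∑ i, ((Matrix.trace (P i * χ)).re) ^ k) = 1 + G.card := by
    intro k hk
    have hk1 : k ≠ 0 := by fin_cases hk <;> norm_num
    have : ∀ i, ((Matrix.trace (P i * χ)).re) ^ k =
        if i ∈ insert i₀ G then (1 : ℝ) else 0 := by
      intro i
      rw [key i]
      rcases eq_or_ne i i₀ with h | h
      · simp [h]
      · by_cases hi : i ∈ G
        · simp only [Finset.mem_insert, hi, or_true, if_pos]
          rcases hφ i hi with h1 | h1 <;> rw [h1] <;> fin_cases hk <;> norm_num
        · simp [Finset.mem_insert, h, hi, hk1]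
    rw [Finset.sum_congr rfl fun i _ => this i, Finset.sum_ite_mem,
      Finset.univ_inter, Finset.sum_const, Finset.card_insert_of_notMem hG0,
      nsmul_eq_mul, mul_one]
    push_cast
    ring
  have h2 := hval 2 (by norm_num)
  have h4 := hval 4 (by norm_num)
  rw [h2, h4, div_self (by positivity), Real.log_one, neg_zero]
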